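/- Let A be a unital C*-algebra, let a ∈ A be positive (0 ≤ a), and let p ∈ A be a projection (p is self-adjoint and p² = p). Suppose there is v ∈ A such that ‖v* a v − p‖ < 1. Then there is w ∈ A such that w* a w = p. -/

import Mathlib

/-- Let `A` be a unital C*-algebra, `a ∈ A` positive, and `p ∈ A` a projection.
If there is `v ∈ A` with `‖v* a v − p‖ < 1`, then there is `w ∈ A` with `w* a w = p`. -/
theorem exists_conj_eq_projection_of_norm_lt_one
    {A : Type*} [NormedRing A] [StarRing A] [CStarRing A] [CompleteSpace A]
    [NormedAlgebra ℂ A] [StarModule ℂ A] [PartialOrder A] [StarOrderedRing A]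
    (a : A) (ha : 0 ≤ a) (p : A) (hp_sa : IsSelfAdjoint p) (hp_idem : p * p = p)
    (v : A) (hv : ‖star v * a * v - p‖ < 1) :
    ∃ w : A, star w * a * w = p := by
  letI : CStarAlgebra A :=
    { ‹NormedRing A›, ‹StarRing A›, ‹CStarRing A›, ‹NormedAlgebra ℂ A›, ‹StarModule ℂ A›,
      ‹CompleteSpace A› with }
  set d := star v * a * v with hd
  set x := p * d * p + (1 - p) with hx
  -- norm of p is at most 1
  have hnp : ‖p‖ ≤ 1 := by
    have h1 : ‖star p * p‖ = ‖p‖ * ‖p‖ := CStarRing.norm_star_mul_self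
    rw [hp_sa.star_eq, hp_idem] at h1
    nlinarith [norm_nonneg p]
  -- x - 1 has small norm
  have hx1 : ‖x - 1‖ < 1 := by
    have hxe : x - 1 = p * (d - p) * p := by
      rw [hx, mul_sub, sub_mul, hp_idem, hp_idem]; abel
    rw [hxe]
    calc ‖p * (d - p) * p‖ ≤ ‖p‖ * ‖d - p‖ * ‖p‖ := by
          refine le_trans (norm_mul_le _ _) ?_
          gcongr
          exact norm_mul_le _ _
      _ ≤ 1 * ‖d - p‖ * 1 := by gcongr
      _ = ‖d - p‖ := by ring
      _ < 1 := hv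
  -- x is a unit
  have hxu : IsUnit x :=
    sub_sub_self 1 x ▸ (Units.oneSub (1 - x) (by rwa [norm_sub_rev] at hx1)).isUnit
  -- x is nonnegative
  have h1p_sa : IsSelfAdjoint (1 - p) := (IsSelfAdjoint.one A).sub hp_sa
  have h1p_idem : (1 - p) * (1 - p) = 1 - p := by
    rw [sub_mul, mul_sub, mul_sub, hp_idem]; simp
  have hx_nonneg : 0 ≤ x := by
    have h1 : 0 ≤ p * d * p := by
      have h := star_left_conjugate_nonneg (star_left_conjugate_nonneg ha v) p
      rwa [hp_sa.star_eq, ← hd] at h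
    have h2 : 0 ≤ 1 - p := by
      have h := star_mul_self_nonneg (1 - p)
      rwa [h1p_sa.star_eq, h1p_idem] at h
    exact add_nonneg h1 h2
  have hx_sa : IsSelfAdjoint x := hx_nonneg.isSelfAdjoint
  -- spectrum of x is positive
  have hsp : spectrum ℝ x ⊆ Set.Ioi 0 := by
    intro t ht
    have h0 : (0:ℝ) ∉ spectrum ℝ x := spectrum.zero_notMem ℝ hxu
    have hnn := (StarOrderedRing.nonneg_iff_spectrum_nonneg (R := ℝ) x).mp hx_nonneg t ht
    rcases hnn.lt_or_eq with h | h
    · exact h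
    · exact absurd (h ▸ ht) h0
  -- the function (√t)⁻¹ and an auxiliary function
  set f : ℝ → ℝ := fun t => (Real.sqrt t)⁻¹ with hf
  set g : ℝ → ℝ := fun t => -((Real.sqrt t * (1 + Real.sqrt t))⁻¹) with hg
  have hsqrt_pos : ∀ t ∈ spectrum ℝ x, 0 < Real.sqrt t := fun t ht =>
    Real.sqrt_pos.mpr (hsp ht)
  have hf_cont : ContinuousOn f (spectrum ℝ x) :=
    Real.continuous_sqrt.continuousOn.inv₀ fun t ht => (hsqrt_pos t ht).ne'
  have hg_cont : ContinuousOn g (spectrum ℝ x) := by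
    refine ContinuousOn.neg (ContinuousOn.inv₀ ?_ fun t ht => ?_)
    · exact (Real.continuous_sqrt.continuousOn).mul
        (continuousOn_const.add Real.continuous_sqrt.continuousOn)
    · have h1 := hsqrt_pos t ht
      positivity
  set c := cfc f x with hc
  -- c is self-adjoint
  have hc_sa : IsSelfAdjoint c := cfc_predicate f x
  -- c * c * x = 1
  have hccx : c * c * x = 1 := by
    rw [hc, ← cfc_mul f f x hf_cont hf_cont]
    nth_rewrite 2 [show x = cfc (fun t : ℝ => t) x from (cfc_id' ℝ x hx_sa).symm]
    rw [← cfc_mul (fun t => f t * f t) (fun t : ℝ => t) x (hf_cont.mul hf_cont) (by fun_prop),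
      ← cfc_const_one ℝ x hx_sa]
    apply cfc_congr
    intro t ht
    have h3 := hsp ht
    have h4 := hsqrt_pos t ht
    have h5 : Real.sqrt t * Real.sqrt t = t := Real.mul_self_sqrt (le_of_lt h3)
    simp only [hf]
    field_simp
    nlinarith [h5]
  -- factorization: c = 1 + cfc g x * (x - 1) and c = 1 + (x - 1) * cfc g x
  have hid : cfc (fun t : ℝ => t - 1) x = x - 1 := by
    rw [cfc_sub (fun t : ℝ => t) (fun _ => (1:ℝ)) x (by fun_prop) (by fun_prop),
      cfc_id' ℝ x hx_sa, cfc_const 1 x hx_sa]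
    simp
  have hfact : ∀ t ∈ spectrum ℝ x, f t = 1 + g t * (t - 1) := by
    intro t ht
    have h3 := hsp ht
    have h4 := hsqrt_pos t ht
    have h5 : Real.sqrt t * Real.sqrt t = t := Real.mul_self_sqrt (le_of_lt h3)
    simp only [hf, hg]
    have h6 : Real.sqrt t * (1 + Real.sqrt t) ≠ 0 := by positivity
    field_simp
    nlinarith [h5]
  have hc_left : c = 1 + cfc g x * (x - 1) := by
    rw [hc, cfc_congr hfact, ← hid,
      ← cfc_mul g _ x hg_cont (by fun_prop),
      ← cfc_const_one ℝ x hx_sa,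
      ← cfc_add x (fun _ => (1:ℝ)) (fun t => g t * (t - 1)) (by fun_prop)
        (hg_cont.mul (by fun_prop))]
  have hc_right : c = 1 + (x - 1) * cfc g x := by
    rw [hc_left]
    congr 1
    rw [← hid, ← cfc_mul _ g x (by fun_prop) hg_cont,
      ← cfc_mul g _ x hg_cont (by fun_prop)]
    apply cfc_congr
    intro t ht
    ring
  -- key annihilation facts
  have hpq : p * (1 - p) = 0 := by rw [mul_sub, hp_idem, mul_one, sub_self]
  have hqp : (1 - p) * p = 0 := by rw [sub_mul, hp_idem, one_mul, sub_self]
  have hxq : x * (1 - p) = 1 - p := by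
    rw [hx, add_mul, mul_assoc, hpq, mul_zero, h1p_idem, zero_add]
  have hqx : (1 - p) * x = 1 - p := by
    rw [hx, mul_add, ← mul_assoc, ← mul_assoc, hqp, zero_mul, zero_mul, h1p_idem, zero_add]
  have hx1q : (x - 1) * (1 - p) = 0 := by
    rw [sub_mul, hxq, one_mul, sub_self]
  have hq1x : (1 - p) * (x - 1) = 0 := by
    rw [mul_sub, hqx, mul_one, sub_self]
  -- c absorbs (1 - p)
  have hcq : c * (1 - p) = 1 - p := by
    rw [hc_left, add_mul, one_mul, mul_assoc, hx1q, mul_zero, add_zero]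
  have hqc : (1 - p) * c = 1 - p := by
    rw [hc_right, mul_add, mul_one, ← mul_assoc, hq1x, zero_mul, add_zero]
  -- c commutes with x
  have hcomm : x * c = c * x := by
    conv_lhs => rw [show x = cfc (fun t : ℝ => t) x from (cfc_id' ℝ x hx_sa).symm]
    conv_rhs => rw [show x = cfc (fun t : ℝ => t) x from (cfc_id' ℝ x hx_sa).symm]
    exact cfc_commute_cfc (fun t : ℝ => t) f x
  have hcxc : c * x * c = 1 := by
    rw [mul_assoc, hcomm, ← mul_assoc, hccx]
  -- conclusion
  refine ⟨v * (p * c), ?_⟩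
  have hw : star (v * (p * c)) * a * (v * (p * c)) = c * (p * d * p) * c := by
    rw [star_mul, star_mul, hc_sa.star_eq, hp_sa.star_eq, hd]
    simp only [mul_assoc]
  rw [hw, show p * d * p = x - (1 - p) by rw [hx]; abel, mul_sub, sub_mul, hcxc,
    mul_assoc, hqc, hcq]
  abel
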